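/- If a Markov kernel K(X,Y|Z) (binary Y, Z, finite X) is a feasible point of the IV polytope at which more than two of the 2n IV inequalities are tight (hold with equality), then a contradiction with the normalization constraints arises; hence at any feasible point at most two IV inequalities can be active. -/

import Mathlib

/-- The polytope of Markov kernels `K(X,Y|Z)` (binary `Y`, `Z`; `X` taking
values in `Fin n`) satisfying the IV inequalities.  `K x y z` denotes
`K(X=x, Y=y | Z=z)`. -/
def IVPolytope (n : ℕ) : Set (Fin n → Bool → Bool → ℝ) :=
  {K | (∀ x y z, 0 ≤ K x y z) ∧ (∀ z, ∑ x, ∑ y, K x y z = 1) ∧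
       (∀ x, K x false false + K x true true ≤ 1 ∧
             K x false true + K x true false ≤ 1)}

open scoped Classical in
/-- At any feasible point of the IV polytope, at most two of the `2n` IV
inequalities (indexed by `(x, z)`, reading `K(x,0|z) + K(x,1|¬z) ≤ 1`)
can be active (tight). -/
theorem stmt6 (n : ℕ) (K : Fin n → Bool → Bool → ℝ) (hK : K ∈ IVPolytope n) :
    (Finset.univ.filter
      (fun p : Fin n × Bool => K p.1 false p.2 + K p.1 true (!p.2) = 1)).card ≤ 2 := by
  obtain ⟨hpos, hnorm, _⟩ := hK
  set f : Fin n × Bool → ℝ := fun p => K p.1 false p.2 + K p.1 true (!p.2) with hf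
  have hfnn : ∀ p : Fin n × Bool, 0 ≤ f p := fun p => add_nonneg (hpos _ _ _) (hpos _ _ _)
  have htot : ∑ p : Fin n × Bool, f p = 2 := by
    have h0 := hnorm false
    have h1 := hnorm true
    simp only [Fintype.sum_bool] at h0 h1 ⊢
    rw [Fintype.sum_prod_type]
    simp only [Fintype.sum_bool, hf]
    have heq : ∑ x : Fin n, ((K x false true + K x true !true) + (K x false false + K x true !false))
        = ∑ x : Fin n, (K x true false + K x false false)
          + ∑ x : Fin n, (K x true true + K x false true) := by
      rw [← Finset.sum_add_distrib]
      refine Finset.sum_congr rfl fun x _ => ?_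
      simp only [Bool.not_true, Bool.not_false]
      ring
    rw [heq, h0, h1]; norm_num
  set S := Finset.univ.filter
      (fun p : Fin n × Bool => K p.1 false p.2 + K p.1 true (!p.2) = 1)
  have hcard : (S.card : ℝ) ≤ 2 := by
    calc (S.card : ℝ) = ∑ p ∈ S, f p := by
          rw [Finset.sum_congr rfl (fun p hp => (Finset.mem_filter.mp hp).2)]
          simp
          rfl
      _ ≤ ∑ p : Fin n × Bool, f p :=
          Finset.sum_le_sum_of_subset_of_nonneg (Finset.subset_univ S)
            (fun p _ _ => hfnn p)
      _ = 2 := htot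
  exact_mod_cast hcard
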